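/- For β ∈ ℝ with |β| ≤ 1/4, (1/(β·ln 2))·(2(cosh(2β·ln η) − 1)) < 4β·(log₂ η)² for all η > 3 and β > 0; more precisely, for 0 < 2β ≤ 1/2 and η ≥ 3, (1/(β ln 2))·s_{2β}(η) ≤ 4β (log₂ η)² ln 2 · cosh(2β ln η) < 4β (log₂ η)², using ln 2 · cosh((ln 3)/2) < 1. -/

import Mathlib

private lemma sinh_le_mul_cosh {t : ℝ} (ht : 0 ≤ t) : Real.sinh t ≤ t * Real.cosh t := by
  have hmono : MonotoneOn (fun x : ℝ => x * Real.cosh x - Real.sinh x) (Set.Ici 0) := by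
    have hder : ∀ x : ℝ, HasDerivAt (fun x : ℝ => x * Real.cosh x - Real.sinh x)
        (x * Real.sinh x) x := by
      intro x
      have h1 := (hasDerivAt_id x).mul (Real.hasDerivAt_cosh x)
      have h2 := h1.sub (Real.hasDerivAt_sinh x)
      refine h2.congr_deriv ?_
      simp [id_eq]
    apply monotoneOn_of_deriv_nonneg (convex_Ici 0)
    · exact (Continuous.continuousOn (by continuity))
    · intro x hx
      exact (hder x).differentiableAt.differentiableWithinAt
    · intro x hx
      rw [interior_Ici, Set.mem_Ioi] at hx
      rw [(hder x).deriv]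
      have : 0 ≤ Real.sinh x := by
        rw [← Real.sinh_zero]
        exact Real.sinh_le_sinh.2 hx.le
      positivity
  have := hmono (Set.self_mem_Ici) (Set.mem_Ici.2 ht) ht
  simp at this
  linarith

private lemma cosh_ineq {x : ℝ} (hx : 0 ≤ x) :
    2 * (Real.cosh x - 1) ≤ x ^ 2 * Real.cosh x := by
  have hc2 : Real.cosh x = 2 * Real.cosh (x / 2) ^ 2 - 1 := by
    have h := Real.cosh_two_mul (x / 2)
    rw [show 2 * (x / 2) = x by ring] at h
    rw [h, Real.cosh_sq]
    ring
  have hsq : Real.cosh (x / 2) ^ 2 = Real.sinh (x / 2) ^ 2 + 1 := Real.cosh_sq _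
  have hs : Real.sinh (x / 2) ≤ (x / 2) * Real.cosh (x / 2) := sinh_le_mul_cosh (by linarith)
  have hs0 : 0 ≤ Real.sinh (x / 2) := by
    rw [← Real.sinh_zero]; exact Real.sinh_le_sinh.2 (by linarith)
  have hc1 : 1 ≤ Real.cosh (x / 2) := Real.one_le_cosh _
  nlinarith [sq_nonneg (Real.sinh (x/2)), sq_nonneg x, mul_le_mul hs hs hs0 (by positivity)]

private lemma numeric_fact : Real.log 2 * ((Real.sqrt 3 + 1 / Real.sqrt 3) / 2) < 1 := by
  have h3 : Real.sqrt 3 ^ 2 = 3 := Real.sq_sqrt (by norm_num)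
  have h3pos : 0 < Real.sqrt 3 := Real.sqrt_pos.2 (by norm_num)
  have hub : Real.sqrt 3 < 1.7321 := by nlinarith
  have hlb : 1.732 < Real.sqrt 3 := by nlinarith
  have hinv : 1 / Real.sqrt 3 = Real.sqrt 3 / 3 := by
    field_simp
    linarith [h3]
  have hlog := Real.log_two_lt_d9
  have hlogpos := Real.log_pos (by norm_num : (1:ℝ) < 2)
  rw [hinv]
  nlinarith

theorem error_term_estimate (β η : ℝ) (hβ : 0 < β) (hβ' : 2 * β ≤ 1 / 2)
    (hη : 3 ≤ η) (hβη : 2 * β * Real.log η ≤ Real.log 3 / 2) :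
    Real.log 2 * ((Real.sqrt 3 + 1 / Real.sqrt 3) / 2) < 1 ∧
    (1 / (β * Real.log 2)) * (2 * (Real.cosh (2 * β * Real.log η) - 1)) ≤
      4 * β * (Real.logb 2 η) ^ 2 * Real.log 2 * Real.cosh (2 * β * Real.log η) ∧
    4 * β * (Real.logb 2 η) ^ 2 * Real.log 2 * Real.cosh (2 * β * Real.log η) <
      4 * β * (Real.logb 2 η) ^ 2 := by
  have hlog2 : 0 < Real.log 2 := Real.log_pos (by norm_num)
  have hlogη : 0 < Real.log η := Real.log_pos (by linarith)
  set x : ℝ := 2 * β * Real.log η with hxdef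
  have hx0 : 0 ≤ x := by positivity
  have hLb : Real.logb 2 η = Real.log η / Real.log 2 := rfl
  refine ⟨numeric_fact, ?_, ?_⟩
  · have key := cosh_ineq hx0
    have hpos : 0 < 1 / (β * Real.log 2) := by positivity
    have h1 : (1 / (β * Real.log 2)) * (2 * (Real.cosh x - 1)) ≤
        (1 / (β * Real.log 2)) * (x ^ 2 * Real.cosh x) := by
      exact mul_le_mul_of_nonneg_left key hpos.le
    have h2 : (1 / (β * Real.log 2)) * (x ^ 2 * Real.cosh x) =
        4 * β * (Real.logb 2 η) ^ 2 * Real.log 2 * Real.cosh x := by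
      rw [hLb, hxdef]
      field_simp
      ring
    linarith [h1, h2.symm.le]
  · have hcosh : Real.cosh x ≤ (Real.sqrt 3 + 1 / Real.sqrt 3) / 2 := by
      have hmono : Real.cosh x ≤ Real.cosh (Real.log 3 / 2) := by
        rw [Real.cosh_le_cosh]
        have hl3 : 0 < Real.log 3 := Real.log_pos (by norm_num)
        rw [abs_of_nonneg hx0, abs_of_nonneg (by positivity)]
        exact hβη
      have hexp : Real.exp (Real.log 3 / 2) = Real.sqrt 3 := by
        symm
        have h1 : Real.exp (Real.log 3 / 2) ^ 2 = 3 := by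
          rw [← Real.exp_nat_mul]
          norm_num
          rw [show (2:ℝ) * (Real.log 3 / 2) = Real.log 3 by ring,
            Real.exp_log (by norm_num)]
        calc Real.sqrt 3 = Real.sqrt (Real.exp (Real.log 3 / 2) ^ 2) := by rw [h1]
          _ = Real.exp (Real.log 3 / 2) := Real.sqrt_sq (Real.exp_pos _).le
      have hch : Real.cosh (Real.log 3 / 2) = (Real.sqrt 3 + 1 / Real.sqrt 3) / 2 := by
        rw [Real.cosh_eq, hexp, Real.exp_neg, hexp, one_div]
      rw [← hch]; exact hmono
    have hfac : 0 < 4 * β * (Real.logb 2 η) ^ 2 := by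
      have : 0 < Real.logb 2 η := by rw [hLb]; positivity
      positivity
    have hlt : Real.log 2 * Real.cosh x < 1 := by
      have h1 : Real.log 2 * Real.cosh x ≤
          Real.log 2 * ((Real.sqrt 3 + 1 / Real.sqrt 3) / 2) :=
        mul_le_mul_of_nonneg_left hcosh hlog2.le
      exact lt_of_le_of_lt h1 numeric_fact
    calc 4 * β * (Real.logb 2 η) ^ 2 * Real.log 2 * Real.cosh x
        = 4 * β * (Real.logb 2 η) ^ 2 * (Real.log 2 * Real.cosh x) := by ring
      _ < 4 * β * (Real.logb 2 η) ^ 2 * 1 := by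
          exact mul_lt_mul_of_pos_left hlt hfac
      _ = 4 * β * (Real.logb 2 η) ^ 2 := by ring
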